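/- Let ρ_AB, σ_AB be density matrices on ℂ^{d_A}⊗ℂ^{d_B} with σ_AB positive definite. If H(λ↓(ρ_AB)‖λ↓(σ_AB)) ≥ H(λ↓(ρ_A)‖λ↑(σ_A)) + H(λ↓(ρ_B)‖λ↑(σ_B)), then there exist unitaries U_A, U_B, U_AB such that S(U_AB ρ_AB U_AB*‖σ_AB) ≥ S(U_A ρ_A U_A*‖σ_A) + S(U_B ρ_B U_B*‖σ_B). -/

import Mathlib

open Matrix ComplexOrder

/-- Classical relative entropy with convention `0 * log 0 = 0` (automatic since
`Real.log 0 = 0`). -/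
noncomputable def relEnt {d : ℕ} (p q : Fin d → ℝ) : ℝ :=
  ∑ i, p i * (Real.log (p i) - Real.log (q i))

/-- Non-decreasing rearrangement `p↑`. -/
noncomputable def sortAsc {d : ℕ} (p : Fin d → ℝ) : Fin d → ℝ :=
  p ∘ Tuple.sort p

/-- Non-increasing rearrangement `p↓`. -/
noncomputable def sortDesc {d : ℕ} (p : Fin d → ℝ) : Fin d → ℝ :=
  (p ∘ Tuple.sort p) ∘ Fin.rev
/-- Matrix logarithm of a Hermitian matrix via its spectral decomposition
(junk value `0` on non-Hermitian matrices). -/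
noncomputable def matLog {n : Type*} [Fintype n] [DecidableEq n]
    (A : Matrix n n ℂ) : Matrix n n ℂ :=
  if h : A.IsHermitian then
    (h.eigenvectorUnitary : Matrix n n ℂ) *
      Matrix.diagonal (fun i => (Real.log (h.eigenvalues i) : ℂ)) *
      (star h.eigenvectorUnitary : Matrix n n ℂ)
  else 0

/-- Eigenvalue vector of a Hermitian matrix (junk value `0` otherwise). -/
noncomputable def evals {n : Type*} [Fintype n] [DecidableEq n]
    (A : Matrix n n ℂ) : n → ℝ :=
  if h : A.IsHermitian then h.eigenvalues else 0

/-- Quantum relative entropy `S(ρ‖σ) = Tr (ρ (log ρ − log σ))`. -/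
noncomputable def qRelEnt {n : Type*} [Fintype n] [DecidableEq n]
    (ρ σ : Matrix n n ℂ) : ℝ :=
  ((ρ * (matLog ρ - matLog σ)).trace).re

/-- von Neumann entropy `S(ρ) = −Tr (ρ log ρ)`. -/
noncomputable def vnEnt {n : Type*} [Fintype n] [DecidableEq n]
    (ρ : Matrix n n ℂ) : ℝ :=
  -((ρ * matLog ρ).trace).re

/-- Partial trace over the second (B) factor. -/
noncomputable def ptraceB {a b : ℕ}
    (ρ : Matrix (Fin a × Fin b) (Fin a × Fin b) ℂ) : Matrix (Fin a) (Fin a) ℂ :=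
  fun i j => ∑ k, ρ (i, k) (j, k)

/-- Partial trace over the first (A) factor. -/
noncomputable def ptraceA {a b : ℕ}
    (ρ : Matrix (Fin a × Fin b) (Fin a × Fin b) ℂ) : Matrix (Fin b) (Fin b) ℂ :=
  fun i j => ∑ k, ρ (k, i) (k, j)

/-- Eigenvalues of a matrix on a bipartite space, reindexed by `Fin (a*b)`. -/
noncomputable def evalsP {a b : ℕ}
    (ρ : Matrix (Fin a × Fin b) (Fin a × Fin b) ℂ) : Fin (a * b) → ℝ :=
  evals ρ ∘ finProdFinEquiv.symm

section AuxLemmas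

open Polynomial

variable {n : Type*} [Fintype n] [DecidableEq n]

lemma diag_real_isHermitian (ν : n → ℝ) :
    (Matrix.diagonal (fun i => (ν i : ℂ))).IsHermitian := by
  rw [Matrix.isHermitian_diagonal_iff]
  intro i
  exact Complex.conj_ofReal (ν i)

lemma conj_diag_isHermitian (W : Matrix n n ℂ) (ν : n → ℝ) :
    (W * Matrix.diagonal (fun i => (ν i : ℂ)) * Wᴴ).IsHermitian :=
  isHermitian_mul_mul_conjTranspose W (diag_real_isHermitian ν)

/-- Conjugation by a unitary as an `ℝ`-algebra homomorphism. -/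
noncomputable def conjAlgHom (W : Matrix n n ℂ) (hW : W ∈ Matrix.unitaryGroup n ℂ) :
    Matrix n n ℂ →ₐ[ℝ] Matrix n n ℂ where
  toFun x := W * x * Wᴴ
  map_one' := by
    show W * 1 * Wᴴ = 1
    rw [mul_one, ← star_eq_conjTranspose]
    exact (Matrix.mem_unitaryGroup_iff).mp hW
  map_mul' x y := by
    show W * (x * y) * Wᴴ = (W * x * Wᴴ) * (W * y * Wᴴ)
    have h1 : Wᴴ * W = 1 := by
      rw [← star_eq_conjTranspose]; exact (Matrix.mem_unitaryGroup_iff').mp hW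
    calc W * (x * y) * Wᴴ = W * x * (Wᴴ * W) * y * Wᴴ := by rw [h1]; noncomm_ring
      _ = W * x * Wᴴ * (W * y * Wᴴ) := by noncomm_ring
  map_zero' := by
    show W * 0 * Wᴴ = 0
    simp
  map_add' x y := by
    show W * (x + y) * Wᴴ = W * x * Wᴴ + W * y * Wᴴ
    noncomm_ring
  commutes' r := by
    have h0 : W * Wᴴ = 1 := by
      rw [← star_eq_conjTranspose]; exact (Matrix.mem_unitaryGroup_iff).mp hW
    show W * (algebraMap ℝ (Matrix n n ℂ) r) * Wᴴ = algebraMap ℝ (Matrix n n ℂ) r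
    rw [Algebra.algebraMap_eq_smul_one, Matrix.mul_smul, Matrix.smul_mul, mul_one, h0]

lemma matLog_eq_cfc {A : Matrix n n ℂ} (hA : A.IsHermitian) :
    matLog A = cfc Real.log A := by
  rw [matLog, dif_pos hA, hA.cfc_eq Real.log, Matrix.IsHermitian.cfc]
  rfl

lemma matLog_conj_diag (W : Matrix n n ℂ) (hW : W ∈ Matrix.unitaryGroup n ℂ) (ν : n → ℝ) :
    matLog (W * Matrix.diagonal (fun i => (ν i : ℂ)) * Wᴴ) =
      W * Matrix.diagonal (fun i => (Real.log (ν i) : ℂ)) * Wᴴ := by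
  classical
  set D : Matrix n n ℂ := Matrix.diagonal (fun i => (ν i : ℂ)) with hDdef
  have hT : (W * D * Wᴴ).IsHermitian := conj_diag_isHermitian W ν
  -- spectrum is contained in the range of ν
  have hsp : spectrum ℝ (W * D * Wᴴ) ⊆ Set.range ν := by
    have hu : W * D * Wᴴ =
        ((⟨W, hW⟩ : Matrix.unitaryGroup n ℂ) : Matrix n n ℂ) * D *
          star (((⟨W, hW⟩ : Matrix.unitaryGroup n ℂ) : Matrix n n ℂ)) := by
      rw [star_eq_conjTranspose]
    intro x hx
    rw [hu, Unitary.spectrum_star_right_conjugate] at hx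
    rw [← spectrum.algebraMap_mem_iff ℂ, hDdef, spectrum_diagonal] at hx
    obtain ⟨i, hi⟩ := hx
    exact ⟨i, Complex.ofReal_injective (by simpa using hi)⟩
  -- interpolating polynomial for Real.log on the (finite) range of ν
  set s : Finset ℝ := Finset.image ν Finset.univ with hs
  set p : ℝ[X] := Lagrange.interpolate s id Real.log with hp
  have hps : ∀ x ∈ Set.range ν, p.eval x = Real.log x := by
    rintro x ⟨i, rfl⟩
    have hmem : ν i ∈ s := Finset.mem_image_of_mem ν (Finset.mem_univ i)
    simpa [hp] using Lagrange.eval_interpolate_at_node (v := id) (r := Real.log)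
      (Set.injOn_id _) hmem
  have key : matLog (W * D * Wᴴ) = aeval (W * D * Wᴴ) p := by
    rw [matLog_eq_cfc hT, ← cfc_polynomial p (W * D * Wᴴ) hT]
    exact cfc_congr (fun x hx => (hps x (hsp hx)).symm)
  rw [key]
  -- compute the polynomial evaluation explicitly
  have hconj : aeval (W * D * Wᴴ) p = W * aeval D p * Wᴴ := by
    have := Polynomial.aeval_algHom_apply (conjAlgHom W hW) D p
    simpa [conjAlgHom] using this
  have hdiagD : D = (Matrix.diagonalAlgHom (n := n) (α := ℂ) ℝ)
      (fun i => (ν i : ℂ)) := rfl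
  have hdiag : aeval D p = Matrix.diagonal (fun i => (Real.log (ν i) : ℂ)) := by
    rw [hdiagD, Polynomial.aeval_algHom_apply]
    have hpt : (aeval (fun i => (ν i : ℂ)) p : n → ℂ)
        = fun i => (Real.log (ν i) : ℂ) := by
      funext i
      have h4 : (aeval (fun j => ((ν j : ℝ) : ℂ)) p) i = aeval ((ν i : ℂ)) p :=
        (Polynomial.aeval_algHom_apply (Pi.evalAlgHom ℝ (fun _ : n => ℂ) i)
          (fun j => ((ν j : ℝ) : ℂ)) p).symm
      rw [h4, show ((ν i : ℝ) : ℂ) = algebraMap ℝ ℂ (ν i) from rfl,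
        Polynomial.aeval_algebraMap_apply, Polynomial.coe_aeval_eq_eval,
        hps (ν i) ⟨i, rfl⟩]
      rfl
    rw [hpt]
    rfl
  rw [hconj, hdiag]

/-- `qRelEnt` of a matrix diagonal in the eigenbasis of `σ`. -/
lemma qRelEnt_conj_diag {σ : Matrix n n ℂ} (hσ : σ.IsHermitian) (ν : n → ℝ) :
    qRelEnt ((hσ.eigenvectorUnitary : Matrix n n ℂ) * Matrix.diagonal (fun i => (ν i : ℂ)) *
        (hσ.eigenvectorUnitary : Matrix n n ℂ)ᴴ) σ =
      ∑ i, ν i * (Real.log (ν i) - Real.log (hσ.eigenvalues i)) := by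
  classical
  set W : Matrix n n ℂ := (hσ.eigenvectorUnitary : Matrix n n ℂ) with hWdef
  have hW : W ∈ Matrix.unitaryGroup n ℂ := SetLike.coe_mem _
  have h1 : Wᴴ * W = 1 := by
    rw [← star_eq_conjTranspose]; exact (Matrix.mem_unitaryGroup_iff').mp hW
  have hlogT := matLog_conj_diag W hW ν
  have hlogσ : matLog σ = W * Matrix.diagonal (fun i => (Real.log (hσ.eigenvalues i) : ℂ)) * Wᴴ := by
    rw [matLog, dif_pos hσ, star_eq_conjTranspose]
  rw [qRelEnt, hlogT, hlogσ]
  have hprod : W * Matrix.diagonal (fun i => (ν i : ℂ)) * Wᴴ *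
      (W * Matrix.diagonal (fun i => (Real.log (ν i) : ℂ)) * Wᴴ -
        W * Matrix.diagonal (fun i => (Real.log (hσ.eigenvalues i) : ℂ)) * Wᴴ) =
      W * Matrix.diagonal
        (fun i => (ν i : ℂ) * ((Real.log (ν i) : ℂ) - (Real.log (hσ.eigenvalues i) : ℂ))) * Wᴴ := by
    rw [← Matrix.sub_mul, ← Matrix.mul_sub]
    calc W * Matrix.diagonal (fun i => (ν i : ℂ)) * Wᴴ *
        (W * (Matrix.diagonal (fun i => (Real.log (ν i) : ℂ)) -
          Matrix.diagonal (fun i => (Real.log (hσ.eigenvalues i) : ℂ))) * Wᴴ)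
        = W * (Matrix.diagonal (fun i => (ν i : ℂ)) * ((Wᴴ * W) *
            (Matrix.diagonal (fun i => (Real.log (ν i) : ℂ)) -
              Matrix.diagonal (fun i => (Real.log (hσ.eigenvalues i) : ℂ))))) * Wᴴ := by
          noncomm_ring
      _ = _ := by
          rw [h1, one_mul, Matrix.diagonal_sub, Matrix.diagonal_mul_diagonal]
  rw [hprod]
  have htr : (W * Matrix.diagonal
      (fun i => (ν i : ℂ) * ((Real.log (ν i) : ℂ) - (Real.log (hσ.eigenvalues i) : ℂ))) * Wᴴ).trace
      = ∑ i, (ν i : ℂ) * ((Real.log (ν i) : ℂ) - (Real.log (hσ.eigenvalues i) : ℂ)) := by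
    rw [Matrix.trace_mul_cycle, h1, Matrix.one_mul, Matrix.trace_diagonal]
  rw [htr, Complex.re_sum]
  congr 1
  funext i
  rw [← Complex.ofReal_sub, ← Complex.ofReal_mul, Complex.ofReal_re]

lemma permMatrix_conjTranspose (e : Equiv.Perm n) :
    (e.toPEquiv.toMatrix : Matrix n n ℂ)ᴴ = e.symm.toPEquiv.toMatrix := by
  ext i j
  rw [conjTranspose_apply, PEquiv.toMatrix_toPEquiv_eq, PEquiv.toMatrix_toPEquiv_eq]
  by_cases h : e j = i
  · have h' : e.symm i = j := by rw [← h, Equiv.symm_apply_apply]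
    simp [h, h', Matrix.one_apply]
  · have h' : e.symm i ≠ j := fun hc => h (by rw [← hc, Equiv.apply_symm_apply])
    simp [Matrix.one_apply, h, h']

lemma permMatrix_mem_unitaryGroup (e : Equiv.Perm n) :
    (e.toPEquiv.toMatrix : Matrix n n ℂ) ∈ Matrix.unitaryGroup n ℂ := by
  rw [Matrix.mem_unitaryGroup_iff, star_eq_conjTranspose, permMatrix_conjTranspose,
    ← PEquiv.toMatrix_trans, ← Equiv.toPEquiv_trans]
  simp [Equiv.self_trans_symm, Equiv.toPEquiv_refl, PEquiv.toMatrix_refl]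

lemma permMatrix_conj_diag (e : Equiv.Perm n) (d : n → ℂ) :
    (e.toPEquiv.toMatrix : Matrix n n ℂ) * Matrix.diagonal d *
      (e.toPEquiv.toMatrix : Matrix n n ℂ)ᴴ = Matrix.diagonal (fun i => d (e i)) := by
  rw [permMatrix_conjTranspose, PEquiv.toMatrix_toPEquiv_mul, PEquiv.mul_toMatrix_toPEquiv]
  ext i j
  simp only [Matrix.submatrix_apply, Equiv.symm_symm, id_eq, Matrix.diagonal_apply]
  by_cases h : i = j
  · simp [h]
  · have : e i ≠ e j := fun hc => h (e.injective hc)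
    simp [h, this]

/-- Main construction: there is a unitary `U` with
`U ρ U* = W_σ diag(λ_ρ ∘ e) W_σ*`, hence an explicit value of `qRelEnt`. -/
lemma exists_unitary_qRelEnt {ρ σ : Matrix n n ℂ} (hρ : ρ.IsHermitian) (hσ : σ.IsHermitian)
    (e : Equiv.Perm n) :
    ∃ U ∈ Matrix.unitaryGroup n ℂ,
      qRelEnt (U * ρ * Uᴴ) σ =
        ∑ i, hρ.eigenvalues (e i) *
          (Real.log (hρ.eigenvalues (e i)) - Real.log (hσ.eigenvalues i)) := by
  classical
  set V : Matrix n n ℂ := (hρ.eigenvectorUnitary : Matrix n n ℂ) with hVdef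
  set W : Matrix n n ℂ := (hσ.eigenvectorUnitary : Matrix n n ℂ) with hWdef
  set P : Matrix n n ℂ := e.toPEquiv.toMatrix with hPdef
  have hVmem : V ∈ Matrix.unitaryGroup n ℂ := SetLike.coe_mem _
  have hWmem : W ∈ Matrix.unitaryGroup n ℂ := SetLike.coe_mem _
  have hPmem : P ∈ Matrix.unitaryGroup n ℂ := permMatrix_mem_unitaryGroup e
  refine ⟨W * P * Vᴴ, ?_, ?_⟩
  · have hstar : W * P * Vᴴ = W * P * star V := by rw [star_eq_conjTranspose]
    rw [hstar]
    exact mul_mem (mul_mem hWmem hPmem) (Unitary.star_mem hVmem)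
  · have hρdecomp : ρ = V * Matrix.diagonal (fun i => (hρ.eigenvalues i : ℂ)) * Vᴴ :=
      hρ.spectral_theorem
    have hVV : Vᴴ * V = 1 := by
      rw [← star_eq_conjTranspose]; exact (Matrix.mem_unitaryGroup_iff').mp hVmem
    have hU : (W * P * Vᴴ) * ρ * (W * P * Vᴴ)ᴴ =
        W * Matrix.diagonal (fun i => (hρ.eigenvalues (e i) : ℂ)) * Wᴴ := by
      have h' : (W * P * Vᴴ) * ρ * (W * P * Vᴴ)ᴴ =
          (W * P * Vᴴ) * (V * Matrix.diagonal (fun i => (hρ.eigenvalues i : ℂ)) * Vᴴ) *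
            (W * P * Vᴴ)ᴴ :=
        congrArg (fun M => (W * P * Vᴴ) * M * (W * P * Vᴴ)ᴴ) hρdecomp
      rw [h']
      have expand : (W * P * Vᴴ) * (V * Matrix.diagonal (fun i => (hρ.eigenvalues i : ℂ)) * Vᴴ) *
          (W * P * Vᴴ)ᴴ =
          W * (P * ((Vᴴ * V) * Matrix.diagonal (fun i => (hρ.eigenvalues i : ℂ)) * ((Vᴴ * V))ᴴ) * Pᴴ) * Wᴴ := by
        simp only [Matrix.conjTranspose_mul, Matrix.conjTranspose_conjTranspose]
        noncomm_ring
      rw [expand, hVV]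
      rw [Matrix.conjTranspose_one, Matrix.one_mul, Matrix.mul_one]
      rw [permMatrix_conj_diag]
    rw [hU]
    exact qRelEnt_conj_diag hσ (fun i => hρ.eigenvalues (e i))

lemma evals_eq {A : Matrix n n ℂ} (hA : A.IsHermitian) : evals A = hA.eigenvalues := by
  rw [evals, dif_pos hA]


lemma ptraceB_isHermitian {a b : ℕ} {ρ : Matrix (Fin a × Fin b) (Fin a × Fin b) ℂ}
    (hρ : ρ.IsHermitian) : (ptraceB ρ).IsHermitian := by
  rw [Matrix.IsHermitian]
  ext i j
  rw [conjTranspose_apply]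
  show star (∑ k, ρ (j, k) (i, k)) = ∑ k, ρ (i, k) (j, k)
  rw [star_sum]
  congr 1
  funext k
  calc star (ρ (j, k) (i, k)) = ρᴴ (i, k) (j, k) := rfl
    _ = ρ (i, k) (j, k) := by rw [hρ]

lemma ptraceA_isHermitian {a b : ℕ} {ρ : Matrix (Fin a × Fin b) (Fin a × Fin b) ℂ}
    (hρ : ρ.IsHermitian) : (ptraceA ρ).IsHermitian := by
  rw [Matrix.IsHermitian]
  ext i j
  rw [conjTranspose_apply]
  show star (∑ k, ρ (k, j) (k, i)) = ∑ k, ρ (k, i) (k, j)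
  rw [star_sum]
  congr 1
  funext k
  calc star (ρ (k, j) (k, i)) = ρᴴ (k, i) (k, j) := rfl
    _ = ρ (k, i) (k, j) := by rw [hρ]

end AuxLemmas

section SortLemmas

noncomputable def g (x y : ℝ) : ℝ := x * (Real.log x - Real.log y)

lemma sum_desc_desc {d : ℕ} (p q : Fin d → ℝ) :
    ∑ i, g (p ((Tuple.sort p) ((Tuple.sort q).symm i))) (q i)
      = relEnt (sortDesc p) (sortDesc q) := by
  rw [relEnt]
  have h1 : ∑ i, g (p ((Tuple.sort p) ((Tuple.sort q).symm i))) (q i)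
      = ∑ k, g (p ((Tuple.sort p) k)) (q ((Tuple.sort q) k)) := by
    rw [← Equiv.sum_comp (Tuple.sort q)
      (fun i => g (p ((Tuple.sort p) ((Tuple.sort q).symm i))) (q i))]
    simp
  have h2 : ∑ i, sortDesc p i * (Real.log (sortDesc p i) - Real.log (sortDesc q i))
      = ∑ k, g (p ((Tuple.sort p) k)) (q ((Tuple.sort q) k)) := by
    rw [← Equiv.sum_comp (Fin.revPerm)
      (fun k => g (p ((Tuple.sort p) k)) (q ((Tuple.sort q) k)))]
    rfl
  rw [h1, ← h2]

lemma sum_desc_asc {d : ℕ} (p q : Fin d → ℝ) :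
    ∑ i, g (p ((Tuple.sort p) (Fin.rev ((Tuple.sort q).symm i)))) (q i)
      = relEnt (sortDesc p) (sortAsc q) := by
  rw [relEnt]
  have h1 : ∑ i, g (p ((Tuple.sort p) (Fin.rev ((Tuple.sort q).symm i)))) (q i)
      = ∑ k, g (p ((Tuple.sort p) (Fin.rev k))) (q ((Tuple.sort q) k)) := by
    rw [← Equiv.sum_comp (Tuple.sort q)
      (fun i => g (p ((Tuple.sort p) (Fin.rev ((Tuple.sort q).symm i)))) (q i))]
    simp
  rw [h1]
  rfl

end SortLemmas

theorem stmt_14 {dA dB : ℕ}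
    (ρ σ : Matrix (Fin dA × Fin dB) (Fin dA × Fin dB) ℂ)
    (hρ : ρ.PosSemidef) (hρ1 : ρ.trace = 1)
    (hσ : σ.PosDef) (hσ1 : σ.trace = 1)
    (h : relEnt (sortDesc (evalsP ρ)) (sortDesc (evalsP σ)) ≥
        relEnt (sortDesc (evals (ptraceB ρ))) (sortAsc (evals (ptraceB σ))) +
        relEnt (sortDesc (evals (ptraceA ρ))) (sortAsc (evals (ptraceA σ)))) :
    ∃ UA ∈ Matrix.unitaryGroup (Fin dA) ℂ,
      ∃ UB ∈ Matrix.unitaryGroup (Fin dB) ℂ,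
        ∃ UAB ∈ Matrix.unitaryGroup (Fin dA × Fin dB) ℂ,
          qRelEnt (UAB * ρ * UABᴴ) σ ≥
            qRelEnt (UA * ptraceB ρ * UAᴴ) (ptraceB σ) +
            qRelEnt (UB * ptraceA ρ * UBᴴ) (ptraceA σ) := by
  classical
  have hρH : ρ.IsHermitian := hρ.1
  have hσH : σ.IsHermitian := hσ.1
  have hρA : (ptraceB ρ).IsHermitian := ptraceB_isHermitian hρH
  have hσA : (ptraceB σ).IsHermitian := ptraceB_isHermitian hσH
  have hρB : (ptraceA ρ).IsHermitian := ptraceA_isHermitian hρH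
  have hσB : (ptraceA σ).IsHermitian := ptraceA_isHermitian hσH
  set F : (Fin dA × Fin dB) ≃ Fin (dA * dB) := finProdFinEquiv with hF
  -- the three permutations
  set sP := Tuple.sort (evalsP ρ) with hsP
  set sQ := Tuple.sort (evalsP σ) with hsQ
  set eAB : Equiv.Perm (Fin dA × Fin dB) := F.trans (sQ.symm.trans (sP.trans F.symm)) with heAB
  set eA : Equiv.Perm (Fin dA) :=
    (Tuple.sort (evals (ptraceB σ))).symm.trans
      (Fin.revPerm.trans (Tuple.sort (evals (ptraceB ρ)))) with heA
  set eB : Equiv.Perm (Fin dB) :=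
    (Tuple.sort (evals (ptraceA σ))).symm.trans
      (Fin.revPerm.trans (Tuple.sort (evals (ptraceA ρ)))) with heB
  obtain ⟨UAB, hUABmem, hUABval⟩ := exists_unitary_qRelEnt hρH hσH eAB
  obtain ⟨UA, hUAmem, hUAval⟩ := exists_unitary_qRelEnt hρA hσA eA
  obtain ⟨UB, hUBmem, hUBval⟩ := exists_unitary_qRelEnt hρB hσB eB
  refine ⟨UA, hUAmem, UB, hUBmem, UAB, hUABmem, ?_⟩
  -- rewrite the A term
  have hAterm : qRelEnt (UA * ptraceB ρ * UAᴴ) (ptraceB σ) =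
      relEnt (sortDesc (evals (ptraceB ρ))) (sortAsc (evals (ptraceB σ))) := by
    rw [hUAval, ← sum_desc_asc (evals (ptraceB ρ)) (evals (ptraceB σ))]
    congr 1
    funext i
    simp only [g, heA, Equiv.trans_apply, Fin.revPerm_apply, evals_eq hρA, evals_eq hσA]
  have hBterm : qRelEnt (UB * ptraceA ρ * UBᴴ) (ptraceA σ) =
      relEnt (sortDesc (evals (ptraceA ρ))) (sortAsc (evals (ptraceA σ))) := by
    rw [hUBval, ← sum_desc_asc (evals (ptraceA ρ)) (evals (ptraceA σ))]
    congr 1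
    funext i
    simp only [g, heB, Equiv.trans_apply, Fin.revPerm_apply, evals_eq hρB, evals_eq hσB]
  have hABterm : qRelEnt (UAB * ρ * UABᴴ) σ =
      relEnt (sortDesc (evalsP ρ)) (sortDesc (evalsP σ)) := by
    rw [hUABval, ← sum_desc_desc (evalsP ρ) (evalsP σ)]
    rw [← Equiv.sum_comp F.symm
      (fun i => hρH.eigenvalues (eAB i) *
        (Real.log (hρH.eigenvalues (eAB i)) - Real.log (hσH.eigenvalues i)))]
    congr 1
    funext k
    have h1 : eAB (F.symm k) = F.symm (sP (sQ.symm k)) := by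
      simp [heAB, Equiv.trans_apply]
    have h2 : ∀ x, hρH.eigenvalues (F.symm x) = evalsP ρ x := by
      intro x; simp only [evalsP, Function.comp_apply, evals_eq hρH, hF]
    have h3 : ∀ x, hσH.eigenvalues (F.symm x) = evalsP σ x := by
      intro x; simp only [evalsP, Function.comp_apply, evals_eq hσH, hF]
    simp only [g, h1, h2, h3]
    rfl
  rw [hABterm, hAterm, hBterm]
  exact h
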